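/- arXiv:2604.14876 — 3 statements merged into one kernel-verified Lean document; each statement's English description precedes it below -/
import Mathlib

section
/- The moment-bounded class L_{1,1} = { ν on ℝ : E_ν[X²] ≤ 1 } is not discrimination equivalent. Specifically, taking ν = δ₁ (the point mass at 1, with mean 1) and ν' = Bernoulli(p) for any p ∈ (0,1), both in L_{1,1} with m(ν) > m(ν'), one has inf { KL(ν̃, ν) / KL_inf^{L_{1,1}}(ν̃, m(ν')) : ν̃ ∈ L_{1,1}, m(ν̃) < m(ν') } = +∞. -/
open MeasureTheory ProbabilityTheory Filter Set
open scoped ENNReal Classical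

noncomputable section

namespace BanditFrag

/-- The mean of a measure on `ℝ`. -/
def mean (ν : Measure ℝ) : ℝ := ∫ x, x ∂ν

/-- Kullback–Leibler divergence `KL(ν,ν') = ∫ log (dν/dν') dν`, equal to `∞` when `ν` is not
absolutely continuous with respect to `ν'` (or the integral is not defined). -/
def KL (ν ν' : Measure ℝ) : ℝ≥0∞ :=
  if ν ≪ ν' ∧ Integrable (fun x => Real.log ((ν.rnDeriv ν' x).toReal)) ν then
    ENNReal.ofReal (∫ x, Real.log ((ν.rnDeriv ν' x).toReal) ∂ν)
  else ⊤

/-- `KL_inf^M(ν, x) = inf { KL(ν,ν') : ν' ∈ M, mean ν' ≥ x }`. -/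
def KLinf (M : Set (Measure ℝ)) (ν : Measure ℝ) (x : ℝ) : ℝ≥0∞ :=
  ⨅ ν' ∈ {ρ | ρ ∈ M ∧ x ≤ mean ρ}, KL ν ν'

/-- Empirical measure of the first `n` entries of a real sequence. -/
def empSeq (x : ℕ → ℝ) (n : ℕ) : Measure ℝ :=
  (n : ℝ≥0∞)⁻¹ • ∑ s ∈ Finset.range n, Measure.dirac (x s)

/-- `X 0, X 1, …` is an i.i.d. sequence with common law `ν` on `(Ω, P)`. -/
structure IsIID {Ω : Type} [MeasurableSpace Ω] (P : Measure Ω) (X : ℕ → Ω → ℝ)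
    (ν : Measure ℝ) : Prop where
  meas : ∀ n, Measurable (X n)
  indep : iIndepFun X P
  law : ∀ n, P.map (X n) = ν

/-- The exploration-bonus shift `g(n) = C₁ log(1+n) + C₂`. -/
def gFun (C₁ C₂ : ℝ) (n : ℕ) : ℝ := C₁ * Real.log (1 + n) + C₂

/-- Assumption 1: a time-uniform exponential deviation bound for the empirical `KL_inf`
at the true mean. -/
def Assumption1 (L : Set (Measure ℝ)) (g : ℕ → ℝ) (ν : Measure ℝ) : Prop :=
  ∀ (Ω : Type) (_ : MeasurableSpace Ω) (P : Measure Ω), IsProbabilityMeasure P →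
    ∀ X : ℕ → Ω → ℝ, IsIID P X ν → ∀ x : ℝ,
      P {ω | ∃ n : ℕ,
          x ≤ (n : ℝ) * (KLinf L (empSeq (fun s => X s ω) n) (mean ν)).toReal - g n}
        ≤ ENNReal.ofReal (Real.exp (-x))

/-- Assumption 2 with explicit constants `d₀`, `c`. -/
def Assumption2With (L : Set (Measure ℝ)) (ν : Measure ℝ) (δ d₀ c : ℝ) : Prop :=
  ∀ d : ℝ, 0 < d → d < d₀ →
    ∀ (Ω : Type) (_ : MeasurableSpace Ω) (P : Measure Ω), IsProbabilityMeasure P →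
      ∀ X : ℕ → Ω → ℝ, IsIID P X ν → ∀ n : ℕ,
        P {ω | (KLinf L (empSeq (fun s => X s ω) n) (mean ν + δ)).toReal
            ≤ (KLinf L ν (mean ν + δ)).toReal - d}
          ≤ ENNReal.ofReal (Real.exp (-((n : ℝ) * c * d ^ 2)))

/-- Assumption 2: a lower-deviation exponential concentration bound for the empirical
`KL_inf` above the mean. -/
def Assumption2 (L : Set (Measure ℝ)) (ν : Measure ℝ) : Prop :=
  ∀ δ : ℝ, 0 < δ → ∃ d₀ > (0 : ℝ), ∃ c > (0 : ℝ), Assumption2With L ν δ d₀ c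

/-! ### Bandit interaction -/

/-- A history is a finite list of (arm, reward) pairs. -/
abbrev Hist (K : ℕ) := List (Fin K × ℝ)

/-- A (deterministic) bandit algorithm maps the observed history to the next arm. -/
abbrev Policy (K : ℕ) := Hist K → Fin K

/-- Number of pulls of arm `a` recorded in a history. -/
def pullsIn {K : ℕ} (a : Fin K) (h : Hist K) : ℕ :=
  (h.filter fun p => decide (p.1 = a)).length

/-- Empirical reward distribution of arm `a` from a history. -/
def empHist {K : ℕ} (a : Fin K) (h : Hist K) : Measure ℝ :=
  (pullsIn a h : ℝ≥0∞)⁻¹ •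
    ((h.filter fun p => decide (p.1 = a)).map fun p => Measure.dirac p.2).sum

/-- The `KL_inf`-UCB index `U_a(N_a(t), t)` computed from a history, with exploration
threshold `f n t` where `n` is the number of pulls of `a`. -/
def ucbIndex (L : Set (Measure ℝ)) (f : ℕ → ℕ → ℝ) {K : ℕ} (a : Fin K) (h : Hist K)
    (t : ℕ) : ℝ :=
  sSup {x : ℝ |
    KLinf L (empHist a h) x ≤ ENNReal.ofReal (f (pullsIn a h) t / (pullsIn a h : ℝ))}

/-- `π` is a Generalized `KL_inf`-UCB algorithm for class `L` with exploration functions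
`f a n t` (`n` = current number of pulls of `a`, `t` = current time): it first pulls each arm
once, and afterwards always pulls an arm maximizing the `KL_inf`-UCB index. -/
structure IsKLinfUCB (L : Set (Measure ℝ)) {K : ℕ} (f : Fin K → ℕ → ℕ → ℝ)
    (π : Policy K) : Prop where
  init : ∀ h : Hist K, (hl : h.length < K) → π h = ⟨h.length, hl⟩
  argmax : ∀ h : Hist K, K ≤ h.length → ∀ b : Fin K,
    ucbIndex L (f b) b h h.length ≤ ucbIndex L (f (π h)) (π h) h h.length

/-- The exploration function `f_a(t) = log t + 2 log log t + g(N_a(t))` with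
`g(n) = C₁ log(1+n) + C₂`. -/
def fUCB (C₁ C₂ : ℝ) : ℕ → ℕ → ℝ :=
  fun n t => Real.log t + 2 * Real.log (Real.log t) + gFun C₁ C₂ n

/-- The history generated by running policy `π` on the table of rewards `z`
(`z t a` is the reward obtained if arm `a` is pulled at round `t`). -/
def hist {K : ℕ} (π : Policy K) (z : ℕ → Fin K → ℝ) : ℕ → Hist K
  | 0 => []
  | t + 1 => hist π z t ++ [(π (hist π z t), z t (π (hist π z t)))]

/-- The arm pulled at round `t` (0-indexed). -/
def arm {K : ℕ} (π : Policy K) (z : ℕ → Fin K → ℝ) (t : ℕ) : Fin K := π (hist π z t)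

/-- `N_a(T)`: the number of pulls of arm `a` during the first `T` rounds. -/
def pulls {K : ℕ} (π : Policy K) (z : ℕ → Fin K → ℝ) (a : Fin K) (T : ℕ) : ℕ :=
  ((Finset.range T).filter fun s => arm π z s = a).card

/-- The stochastic environment: `Z t a` is the (would-be) reward of arm `a` at round `t`;
the rewards are independent and `Z t a` has law `ν a`.  Together with a policy `π`, this
realizes the interaction measure `P^π_ν` on trajectories. -/
structure IsBanditEnv {K : ℕ} {Ω : Type} [MeasurableSpace Ω] (P : Measure Ω)
    (Z : ℕ → Fin K → Ω → ℝ) (ν : Fin K → Measure ℝ) : Prop where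
  prob : IsProbabilityMeasure P
  meas : ∀ t a, Measurable (Z t a)
  indep : iIndepFun (fun p : ℕ × Fin K => Z p.1 p.2) P
  law : ∀ t a, P.map (Z t a) = ν a

/-- The reward table seen along the outcome `ω`. -/
def tab {K : ℕ} {Ω : Type} (Z : ℕ → Fin K → Ω → ℝ) (ω : Ω) : ℕ → Fin K → ℝ :=
  fun t a => Z t a ω

/-- `π` is `M^K`-optimal: in every environment with arm distributions in `M`, every
suboptimal arm `a` satisfies `E[N_a(T)] / log T → 1 / KL_inf^M(ν_a, μ*)`. -/
def IsOptimal (M : Set (Measure ℝ)) (K : ℕ) (π : Policy K) : Prop :=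
  ∀ (Ω : Type) (_ : MeasurableSpace Ω) (P : Measure Ω) (Z : ℕ → Fin K → Ω → ℝ)
    (ν : Fin K → Measure ℝ), IsBanditEnv P Z ν → (∀ a, ν a ∈ M) →
    ∀ a : Fin K, mean (ν a) < ⨆ b, mean (ν b) →
      Tendsto (fun T : ℕ => (∫ ω, (pulls π (tab Z ω) a T : ℝ) ∂P) / Real.log T) atTop
        (nhds (1 / (KLinf M (ν a) (⨆ b, mean (ν b))).toReal))

/-- `inf { KL(ν̃, νj) / KL_inf^M(ν̃, μ) : ν̃ ∈ M, mean ν̃ < μ }`. -/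
def ratioInf (M : Set (Measure ℝ)) (νj : Measure ℝ) (μ : ℝ) : ℝ≥0∞ :=
  ⨅ νt ∈ {ρ | ρ ∈ M ∧ mean ρ < μ}, KL νt νj / KLinf M νt μ

/-- A class `M` is discrimination equivalent if for every `ν, ν' ∈ M` with
`mean ν' < mean ν`, `inf { KL(ν̃, ν)/KL_inf^M(ν̃, mean ν') : ν̃ ∈ M, mean ν̃ < mean ν' } = 1`. -/
def DiscrimEquiv (M : Set (Measure ℝ)) : Prop :=
  ∀ ν ∈ M, ∀ ν' ∈ M, mean ν' < mean ν → ratioInf M ν (mean ν') = 1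


/-- The moment-bounded class `L_{B,ε} = { ν : E_ν[|X|^{1+ε}] ≤ B }` (probability measures). -/
def momentClass (B ε : ℝ) : Set (Measure ℝ) :=
  {ν | IsProbabilityMeasure ν ∧ ∫⁻ x, ENNReal.ofReal (|x| ^ (1 + ε)) ∂ν ≤ ENNReal.ofReal B}

/-- The Bernoulli(p) distribution on ℝ: mass `p` at `1` and `1−p` at `0`. -/
def bern (p : ℝ) : Measure ℝ :=
  ENNReal.ofReal p • Measure.dirac 1 + ENNReal.ofReal (1 - p) • Measure.dirac 0

lemma abs_rpow_two (x : ℝ) : |x| ^ ((1:ℝ) + 1) = x ^ 2 := by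
  rw [show (1:ℝ)+1 = ((2:ℕ):ℝ) by norm_num, Real.rpow_natCast, sq_abs]

lemma moment_eq (ν : Measure ℝ) :
    ∫⁻ x, ENNReal.ofReal (|x| ^ ((1:ℝ) + 1)) ∂ν = ∫⁻ x, ENNReal.ofReal (x ^ 2) ∂ν :=
  lintegral_congr fun x => by rw [abs_rpow_two]

lemma mem_momentClass_iff (ν : Measure ℝ) :
    ν ∈ momentClass 1 1 ↔ IsProbabilityMeasure ν ∧ ∫⁻ x, ENNReal.ofReal (x ^ 2) ∂ν ≤ 1 := by
  rw [momentClass]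
  simp only [Set.mem_setOf_eq, moment_eq, ENNReal.ofReal_one]

lemma integrable_id_of_mem {ν : Measure ℝ} (h : ν ∈ momentClass 1 1) :
    Integrable (fun x : ℝ => x) ν := by
  obtain ⟨hprob, hmom⟩ := (mem_momentClass_iff ν).mp h
  refine ⟨measurable_id.aestronglyMeasurable, ?_⟩
  rw [HasFiniteIntegral]
  calc ∫⁻ x, ‖x‖₊ ∂ν ≤ ∫⁻ x, 1 + ENNReal.ofReal (x ^ 2) ∂ν := by
        refine lintegral_mono fun x => ?_
        rw [← enorm_eq_nnnorm, ← ofReal_norm, ← ENNReal.ofReal_one,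
          ← ENNReal.ofReal_add zero_le_one (sq_nonneg x)]
        exact ENNReal.ofReal_le_ofReal (by rw [Real.norm_eq_abs]; nlinarith [sq_nonneg (|x| - 1), abs_nonneg x, sq_abs x])
    _ = ν Set.univ + ∫⁻ x, ENNReal.ofReal (x ^ 2) ∂ν := by
        rw [lintegral_add_left measurable_const, lintegral_one]
    _ ≤ 1 + 1 := by
        rw [hprob.measure_univ]
        exact add_le_add le_rfl hmom
    _ < ⊤ := by norm_num


lemma exists_nonatom {ν : Measure ℝ} [IsProbabilityMeasure ν] {p : ℝ} (hp : p < 1) :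
    ∃ c ∈ Set.Ioo p 1, ν {c} = 0 := by
  have hcnt : {x : ℝ | 0 < ν {x}}.Countable := by
    exact Measure.countable_meas_pos_of_disjoint_iUnion₀
      (As := fun x : ℝ => {x}) (fun x => (measurableSet_singleton x).nullMeasurableSet)
      (fun x y hxy => (Set.disjoint_singleton.mpr hxy).aedisjoint)
  by_contra hcon
  push_neg at hcon
  have hsub : Set.Ioo p 1 ⊆ {x : ℝ | 0 < ν {x}} := by
    intro c hc
    exact pos_iff_ne_zero.mpr (hcon c hc)
  have hIoo : (Set.Ioo p 1).Countable := hcnt.mono hsub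
  rw [Set.countable_iff_exists_injective] at hIoo
  have := Cardinal.mk_Ioo_real hp
  have h2 : Cardinal.mk (Set.Ioo p 1) ≤ Cardinal.aleph0 := by
    rw [Cardinal.le_aleph0_iff_set_countable]
    · exact (Set.countable_coe_iff).mp (by
        rw [Set.countable_coe_iff]
        exact Set.Countable.mono hsub hcnt)
  rw [this] at h2
  exact absurd h2 (not_le.mpr Cardinal.aleph0_lt_continuum)

lemma integrable_id_dirac (c : ℝ) : Integrable (fun x : ℝ => x) (Measure.dirac c) := by
  refine ⟨measurable_id.aestronglyMeasurable, ?_⟩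
  rw [HasFiniteIntegral, lintegral_dirac' c measurable_enorm]
  exact enorm_lt_top

lemma klinf_ne_top {nu : Measure ℝ} (h : nu ∈ momentClass 1 1) {p : ℝ}
    (hp1 : p < 1) (hm : mean nu < p) :
    KLinf (momentClass 1 1) nu p ≠ ⊤ := by
  obtain ⟨hprob, hmom⟩ := (mem_momentClass_iff nu).mp h
  obtain ⟨c, hcIoo, hc0⟩ := exists_nonatom (ν := nu) (show max p 0 < 1 by
    simp [hp1, zero_lt_one])
  have hcp : p < c := lt_of_le_of_lt (le_max_left p 0) hcIoo.1
  have hcpos : 0 < c := lt_of_le_of_lt (le_max_right p 0) hcIoo.1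
  have hc1 : c < 1 := hcIoo.2
  set m := mean nu with hm_def
  have hmc : m < c := lt_trans hm hcp
  set t : ℝ := (p - m) / (c - m) with ht_def
  have ht0 : 0 < t := div_pos (by linarith) (by linarith)
  have ht1 : t < 1 := (div_lt_one (by linarith)).mpr (by linarith)
  have htc : t * (c - m) = p - m := div_mul_cancel₀ _ (by linarith : c - m ≠ 0)
  set s : ℝ := 1 - t with hs_def
  have hs : 0 < s := by simp only [hs_def]; linarith
  set ν' : Measure ℝ := ENNReal.ofReal s • nu + ENNReal.ofReal t • Measure.dirac c with hν'
  set g : ℝ → ℝ≥0∞ := fun x => if x = c then 0 else ENNReal.ofReal s⁻¹ with hg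
  have hgmeas : Measurable g := Measurable.ite measurableSet_eq measurable_const measurable_const
  have haene : ∀ᵐ x ∂nu, x ≠ c := by
    rw [ae_iff]
    simpa using hc0
  have hnueq : nu = ν'.withDensity g := by
    ext A hA
    rw [withDensity_apply _ hA, hν', Measure.restrict_add, Measure.restrict_smul,
      Measure.restrict_smul, lintegral_add_measure, lintegral_smul_measure,
      lintegral_smul_measure]
    have h1 : ∫⁻ x in A, g x ∂nu = ENNReal.ofReal s⁻¹ * nu A := by
      have hae : ∀ᵐ x ∂nu, g x = ENNReal.ofReal s⁻¹ := by
        filter_upwards [haene] with x hx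
        simp [hg, hx]
      rw [lintegral_congr_ae (ae_restrict_of_ae hae), setLIntegral_const]
    have h2 : ∫⁻ x in A, g x ∂(Measure.dirac c) = 0 := by
      rw [restrict_dirac' hA]
      split_ifs with hcA
      · rw [lintegral_dirac' c hgmeas]
        simp [hg]
      · simp
    rw [h1, h2, smul_eq_mul, smul_eq_mul, mul_zero, add_zero, ← mul_assoc, ← ENNReal.ofReal_mul hs.le,
      mul_inv_cancel₀ hs.ne', ENNReal.ofReal_one, one_mul]
  have hac : nu ≪ ν' := hnueq ▸ withDensity_absolutelyContinuous ν' g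
  haveI hprob' : IsProbabilityMeasure ν' := by
    constructor
    rw [hν']
    simp only [Measure.coe_add, Pi.add_apply, Measure.coe_smul, Pi.smul_apply, smul_eq_mul]
    rw [hprob.measure_univ, Measure.dirac_apply_of_mem (Set.mem_univ c), mul_one, mul_one,
      ← ENNReal.ofReal_add hs.le ht0.le,
      show s + t = 1 by rw [hs_def]; ring, ENNReal.ofReal_one]
  have hrn : g =ᵐ[ν'] nu.rnDeriv ν' := by
    refine Measure.eq_rnDeriv hgmeas Measure.MutuallySingular.zero_left ?_
    rw [zero_add]; exact hnueq
  have hrn2 : nu.rnDeriv ν' =ᵐ[nu] fun _ => ENNReal.ofReal s⁻¹ := by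
    have h3 : g =ᵐ[nu] nu.rnDeriv ν' := hac.ae_eq hrn
    filter_upwards [h3, haene] with x hx hxc
    rw [← hx]
    simp [hg, hxc]
  have hint : Integrable (fun x => Real.log ((nu.rnDeriv ν' x).toReal)) nu := by
    refine (integrable_const (Real.log ((ENNReal.ofReal s⁻¹).toReal))).congr ?_
    filter_upwards [hrn2] with x hx
    rw [hx]
  have hKL : KL nu ν' ≠ ⊤ := by
    rw [KL, if_pos ⟨hac, hint⟩]
    exact ENNReal.ofReal_ne_top
  have hcabs : |c| ≤ 1 := by
    rw [abs_le]
    constructor <;> linarith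
  have hmom' : ∫⁻ x, ENNReal.ofReal (x ^ 2) ∂ν' ≤ 1 := by
    rw [hν', lintegral_add_measure, lintegral_smul_measure, lintegral_smul_measure,
      lintegral_dirac' c (show Measurable fun x : ℝ => ENNReal.ofReal (x ^ 2) from by fun_prop)]
    calc ENNReal.ofReal s * (∫⁻ x, ENNReal.ofReal (x ^ 2) ∂nu) +
          ENNReal.ofReal t * ENNReal.ofReal (c ^ 2)
        ≤ ENNReal.ofReal s * 1 + ENNReal.ofReal t * 1 := by
          refine add_le_add (mul_le_mul_right hmom _) (mul_le_mul_right ?_ _)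
          rw [← ENNReal.ofReal_one]
          refine ENNReal.ofReal_le_ofReal ?_
          nlinarith [sq_abs c, abs_nonneg c]
      _ = 1 := by
          rw [mul_one, mul_one, ← ENNReal.ofReal_add hs.le ht0.le,
            show s + t = 1 by rw [hs_def]; ring, ENNReal.ofReal_one]
  have hmean' : mean ν' = p := by
    have hid : Integrable (fun x : ℝ => x) nu := integrable_id_of_mem h
    rw [mean, hν', integral_add_measure
      (hid.smul_measure ENNReal.ofReal_ne_top)
      ((integrable_id_dirac c).smul_measure ENNReal.ofReal_ne_top),
      integral_smul_measure, integral_smul_measure, integral_dirac,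
      ENNReal.toReal_ofReal hs.le, ENNReal.toReal_ofReal ht0.le]
    simp only [smul_eq_mul, id_eq]
    have hid2 : (∫ x, x ∂nu) = m := rfl
    rw [hid2]
    nlinarith [htc]
  have hle : KLinf (momentClass 1 1) nu p ≤ KL nu ν' := by
    refine iInf₂_le ν' ?_
    exact ⟨(mem_momentClass_iff ν').mpr ⟨hprob', hmom'⟩, le_of_eq hmean'.symm⟩
  exact fun htop => hKL (top_le_iff.mp (htop ▸ hle))


lemma ofReal_sq_measurable : Measurable fun x : ℝ => ENNReal.ofReal (x ^ 2) := by fun_prop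

lemma dirac_one_mem : Measure.dirac (1 : ℝ) ∈ momentClass 1 1 := by
  rw [mem_momentClass_iff]
  refine ⟨inferInstance, ?_⟩
  rw [lintegral_dirac' 1 ofReal_sq_measurable]
  norm_num

lemma bern_prob {p : ℝ} (hp : p ∈ Set.Ioo (0:ℝ) 1) : IsProbabilityMeasure (bern p) := by
  constructor
  rw [bern]
  simp only [Measure.coe_add, Pi.add_apply, Measure.coe_smul, Pi.smul_apply, smul_eq_mul]
  rw [Measure.dirac_apply_of_mem (Set.mem_univ (1:ℝ)),
    Measure.dirac_apply_of_mem (Set.mem_univ (0:ℝ)), mul_one, mul_one,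
    ← ENNReal.ofReal_add hp.1.le (by linarith [hp.2])]
  norm_num

lemma bern_mem {p : ℝ} (hp : p ∈ Set.Ioo (0:ℝ) 1) : bern p ∈ momentClass 1 1 := by
  rw [mem_momentClass_iff]
  refine ⟨bern_prob hp, ?_⟩
  rw [bern, lintegral_add_measure, lintegral_smul_measure, lintegral_smul_measure,
    lintegral_dirac' 1 ofReal_sq_measurable, lintegral_dirac' 0 ofReal_sq_measurable]
  calc ENNReal.ofReal p * ENNReal.ofReal (1 ^ 2) + ENNReal.ofReal (1 - p) * ENNReal.ofReal (0 ^ 2)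
      = ENNReal.ofReal p := by norm_num
    _ ≤ 1 := ENNReal.ofReal_le_one.mpr hp.2.le

lemma mean_dirac_one : mean (Measure.dirac (1:ℝ)) = 1 := by
  rw [mean, integral_dirac]

lemma mean_bern {p : ℝ} (hp : p ∈ Set.Ioo (0:ℝ) 1) : mean (bern p) = p := by
  rw [mean, bern, integral_add_measure
    ((integrable_id_dirac 1).smul_measure ENNReal.ofReal_ne_top)
    ((integrable_id_dirac 0).smul_measure ENNReal.ofReal_ne_top),
    integral_smul_measure, integral_smul_measure, integral_dirac, integral_dirac,
    ENNReal.toReal_ofReal hp.1.le, ENNReal.toReal_ofReal (by linarith [hp.2] : (0:ℝ) ≤ 1 - p)]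
  simp

lemma KL_dirac_top {νt : Measure ℝ} (h : νt ∈ momentClass 1 1) {p : ℝ}
    (hp1 : p < 1) (hm : mean νt < p) : KL νt (Measure.dirac 1) = ⊤ := by
  rw [KL, if_neg]
  rintro ⟨hac, -⟩
  have h1 : ∀ᵐ x ∂(Measure.dirac (1:ℝ)), x = 1 := by
    rw [ae_dirac_eq]; exact Filter.eventually_pure.mpr rfl
  have h2 : ∀ᵐ x ∂νt, x = 1 := hac.ae_le h1
  haveI : IsProbabilityMeasure νt := h.1
  have h3 : mean νt = 1 := by
    rw [mean, integral_congr_ae (h2.mono fun x hx => hx), integral_const]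
    simp
  linarith


/-- Example 1: the moment-bounded class `L_{1,1}` is not discrimination
equivalent; specifically, with `ν = δ₁` and `ν' = Bernoulli(p)`, both in `L_{1,1}` with
`m(ν) > m(ν')`, the infimum of `KL(ν̃,ν)/KL_inf(ν̃, m(ν'))` over `ν̃ ∈ L_{1,1}` with
`mean ν̃ < m(ν')` equals `+∞`. -/
theorem momentClass_not_discrimination_equivalent
    (p : ℝ) (hp : p ∈ Set.Ioo (0 : ℝ) 1) :
    Measure.dirac (1 : ℝ) ∈ momentClass 1 1 ∧ bern p ∈ momentClass 1 1 ∧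
    mean (bern p) < mean (Measure.dirac (1 : ℝ)) ∧
    ratioInf (momentClass 1 1) (Measure.dirac (1 : ℝ)) (mean (bern p)) = ⊤ ∧
    ¬ DiscrimEquiv (momentClass 1 1) := by
  have hmb := mean_bern hp
  have hmlt : mean (bern p) < mean (Measure.dirac (1:ℝ)) := by
    rw [hmb, mean_dirac_one]; exact hp.2
  have hratio : ratioInf (momentClass 1 1) (Measure.dirac (1 : ℝ)) (mean (bern p)) = ⊤ := by
    rw [ratioInf, eq_top_iff]
    refine le_iInf₂ fun νt hνt => ?_
    obtain ⟨hmem, hmean⟩ := hνt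
    rw [hmb] at hmean
    rw [hmb, KL_dirac_top hmem hp.2 hmean, ENNReal.top_div,
      if_neg (klinf_ne_top hmem hp.2 hmean)]
  refine ⟨dirac_one_mem, bern_mem hp, hmlt, hratio, fun hD => ?_⟩
  have := hD (Measure.dirac 1) dirac_one_mem (bern p) (bern_mem hp) hmlt
  rw [hratio] at this
  exact ENNReal.top_ne_one this

end BanditFrag
end
end

section
/- The bounded-support class L_{[0,1]} of probability distributions on [0,1] is not discrimination equivalent: taking ν = Bernoulli(p) and ν' = Bernoulli(q) with 0 < q < p < 1, every ν̃ ∈ L_{[0,1]} with m(ν̃) < q and KL(ν̃, ν) < ∞ is either Bernoulli(r) with r ∈ (0,1), r < q, or δ₀, and in each case KL(ν̃, ν) / KL_inf^{L_{[0,1]}}(ν̃, q) ≠ 1; hence inf { KL(ν̃, ν) / KL_inf^{L_{[0,1]}}(ν̃, q) : ν̃ ∈ L_{[0,1]}, m(ν̃) < q } ≠ 1. -/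
open MeasureTheory ProbabilityTheory Filter Set
open scoped ENNReal Classical

noncomputable section

namespace BanditFrag

/-- The class of probability distributions supported on `[a, b]`. -/
def boundedClass (a b : ℝ) : Set (Measure ℝ) :=
  {ν | IsProbabilityMeasure ν ∧ ν (Set.Icc a b)ᶜ = 0}

/-! ### Auxiliary lemmas for Statement 8 -/

lemma withDensity_dirac' {g : ℝ → ℝ≥0∞} (hg : Measurable g) (a : ℝ) :
    (Measure.dirac a).withDensity g = g a • Measure.dirac a := by
  ext s hs
  rw [withDensity_apply _ hs, Measure.smul_apply, smul_eq_mul,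
    setLIntegral_dirac' hg hs, Measure.dirac_apply' _ hs]
  by_cases h : a ∈ s <;> simp [h]

lemma integrable_dirac' {f : ℝ → ℝ} (hf : Measurable f) (a : ℝ) :
    Integrable f (Measure.dirac a) := by
  refine ⟨hf.aestronglyMeasurable, ?_⟩
  simp only [HasFiniteIntegral, lintegral_dirac]
  exact ENNReal.coe_lt_top

lemma integrable_smul_dirac {f : ℝ → ℝ} (hf : Measurable f) {c : ℝ≥0∞} (hc : c ≠ ⊤) (a : ℝ) :
    Integrable f (c • Measure.dirac a) :=
  (integrable_dirac' hf a).smul_measure hc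

lemma integrable_bern {f : ℝ → ℝ} (hf : Measurable f) (r : ℝ) :
    Integrable f (bern r) :=
  (integrable_smul_dirac hf ENNReal.ofReal_ne_top 1).add_measure
    (integrable_smul_dirac hf ENNReal.ofReal_ne_top 0)

lemma integral_bern {f : ℝ → ℝ} (hf : Measurable f) {r : ℝ} (h0 : 0 ≤ r) (h1 : r ≤ 1) :
    ∫ x, f x ∂bern r = r * f 1 + (1 - r) * f 0 := by
  rw [bern, integral_add_measure (integrable_smul_dirac hf ENNReal.ofReal_ne_top 1)
      (integrable_smul_dirac hf ENNReal.ofReal_ne_top 0),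
    integral_smul_measure, integral_smul_measure, integral_dirac, integral_dirac,
    ENNReal.toReal_ofReal h0, ENNReal.toReal_ofReal (by linarith : (0:ℝ) ≤ 1 - r)]
  simp [smul_eq_mul]

lemma isProb_bern {r : ℝ} (h0 : 0 ≤ r) (h1 : r ≤ 1) : IsProbabilityMeasure (bern r) := by
  constructor
  rw [bern, Measure.add_apply, Measure.smul_apply, Measure.smul_apply]
  simp [← ENNReal.ofReal_add h0 (by linarith : (0:ℝ) ≤ 1 - r)]

lemma bern_mem_class {r : ℝ} (h0 : 0 ≤ r) (h1 : r ≤ 1) : bern r ∈ boundedClass 0 1 := by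
  refine ⟨isProb_bern h0 h1, ?_⟩
  rw [bern, Measure.add_apply, Measure.smul_apply, Measure.smul_apply,
    Measure.dirac_apply' _ measurableSet_Icc.compl, Measure.dirac_apply' _ measurableSet_Icc.compl]
  have h1m : (1:ℝ) ∈ Icc (0:ℝ) 1 := by constructor <;> norm_num
  have h0m : (0:ℝ) ∈ Icc (0:ℝ) 1 := by constructor <;> norm_num
  simp [h1m, h0m]

lemma mean_bern_s8 {r : ℝ} (h0 : 0 ≤ r) (h1 : r ≤ 1) : mean (bern r) = r := by
  have h := integral_bern (f := fun x => x) measurable_id h0 h1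
  simp only [mean, h]
  ring

lemma bern_zero : bern 0 = Measure.dirac 0 := by
  simp [bern]

lemma bern_compl_pair (p : ℝ) : bern p (({0, 1} : Set ℝ)ᶜ) = 0 := by
  have hms : MeasurableSet (({0, 1} : Set ℝ)ᶜ) :=
    (MeasurableSet.union (measurableSet_singleton 0) (measurableSet_singleton 1)).compl
  rw [bern, Measure.add_apply, Measure.smul_apply, Measure.smul_apply,
    Measure.dirac_apply' _ hms, Measure.dirac_apply' _ hms]
  simp

lemma eq_bern_of_null_compl {νt : Measure ℝ} [IsProbabilityMeasure νt]
    (hnull : νt (({0, 1} : Set ℝ)ᶜ) = 0) :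
    0 ≤ (νt {1}).toReal ∧ (νt {1}).toReal ≤ 1 ∧ νt = bern ((νt {1}).toReal) := by
  set r := (νt {1}).toReal with hrdef
  have h1top : νt {1} ≠ ⊤ := measure_ne_top νt _
  have hle1 : νt {1} ≤ 1 := prob_le_one
  have hr0 : 0 ≤ r := ENNReal.toReal_nonneg
  have hr1 : r ≤ 1 := by
    rw [hrdef, ← ENNReal.toReal_one]
    exact ENNReal.toReal_mono ENNReal.one_ne_top hle1
  have ofr : ENNReal.ofReal r = νt {1} := ENNReal.ofReal_toReal h1top
  have hpair : νt ({0, 1} : Set ℝ) = 1 := by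
    have := measure_add_measure_compl (μ := νt) ((measurableSet_singleton (1:ℝ)).insert 0)
    rw [hnull, add_zero, measure_univ] at this
    exact this
  have hsum : νt {0} + νt {1} = 1 := by
    rw [← hpair, show ({0, 1} : Set ℝ) = {0} ∪ {1} from (Set.singleton_union).symm,
      measure_union (by simp) (measurableSet_singleton 1)]
  have h0eq : νt {0} = ENNReal.ofReal (1 - r) := by
    rw [ENNReal.ofReal_sub _ hr0, ENNReal.ofReal_one, ofr]
    exact ENNReal.eq_sub_of_add_eq h1top hsum
  refine ⟨hr0, hr1, ?_⟩
  ext s hs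
  have key : νt s = νt (s ∩ {1}) + νt (s ∩ {0}) := by
    have d1 := measure_inter_add_diff (μ := νt) s (measurableSet_singleton 1)
    have d2 := measure_inter_add_diff (μ := νt) (s \ {1}) (measurableSet_singleton 0)
    have h3 : νt ((s \ {1}) \ {0}) = 0 := by
      refine measure_mono_null ?_ hnull
      intro x hx
      simp only [mem_diff, mem_singleton_iff] at hx
      simp only [mem_compl_iff, mem_insert_iff, mem_singleton_iff]
      push_neg
      exact ⟨hx.2, hx.1.2⟩
    have h4 : (s \ {1}) ∩ {0} = s ∩ {0} := by
      ext x
      simp only [mem_inter_iff, mem_diff, mem_singleton_iff]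
      constructor
      · rintro ⟨⟨hxs, _⟩, hx0⟩; exact ⟨hxs, hx0⟩
      · rintro ⟨hxs, hx0⟩; exact ⟨⟨hxs, by rw [hx0]; norm_num⟩, hx0⟩
    rw [h4, h3, add_zero] at d2
    rw [← d1, ← d2]
  have hb : bern r s = ENNReal.ofReal r * (if (1:ℝ) ∈ s then 1 else 0)
      + ENNReal.ofReal (1 - r) * (if (0:ℝ) ∈ s then 1 else 0) := by
    rw [bern, Measure.add_apply, Measure.smul_apply, Measure.smul_apply,
      Measure.dirac_apply' _ hs, Measure.dirac_apply' _ hs]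
    by_cases h1s : (1:ℝ) ∈ s <;> by_cases h0s : (0:ℝ) ∈ s <;>
      simp [h1s, h0s, indicator]
  have i1 : νt (s ∩ {1}) = νt {1} * if (1:ℝ) ∈ s then 1 else 0 := by
    by_cases h1s : (1:ℝ) ∈ s
    · rw [Set.inter_eq_self_of_subset_right (Set.singleton_subset_iff.mpr h1s), if_pos h1s,
        mul_one]
    · rw [Set.inter_singleton_eq_empty.mpr h1s, if_neg h1s, mul_zero, measure_empty]
  have i0 : νt (s ∩ {0}) = νt {0} * if (0:ℝ) ∈ s then 1 else 0 := by
    by_cases h0s : (0:ℝ) ∈ s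
    · rw [Set.inter_eq_self_of_subset_right (Set.singleton_subset_iff.mpr h0s), if_pos h0s,
        mul_one]
    · rw [Set.inter_singleton_eq_empty.mpr h0s, if_neg h0s, mul_zero, measure_empty]
  rw [key, hb, ofr, ← h0eq, i1, i0]

lemma KL_bern {r s : ℝ} (hr0 : 0 ≤ r) (hr1 : r ≤ 1) (hs0 : 0 < s) (hs1 : s < 1) :
    KL (bern r) (bern s)
      = ENNReal.ofReal (r * Real.log (r / s) + (1 - r) * Real.log ((1 - r) / (1 - s))) := by
  haveI : IsProbabilityMeasure (bern s) := isProb_bern hs0.le hs1.le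
  have hsetone : {x : ℝ | x = 1} = {1} := Set.setOf_eq_eq_singleton
  set g : ℝ → ℝ≥0∞ :=
    fun x => if x = 1 then ENNReal.ofReal (r / s) else ENNReal.ofReal ((1 - r) / (1 - s))
    with hgdef
  have hg : Measurable g := by
    refine Measurable.ite ?_ measurable_const measurable_const
    rw [hsetone]; exact measurableSet_singleton 1
  have hW : (bern s).withDensity g = bern r := by
    rw [bern, bern, withDensity_add_measure, withDensity_smul_measure, withDensity_smul_measure,
      withDensity_dirac' hg, withDensity_dirac' hg]
    have hg1 : g 1 = ENNReal.ofReal (r / s) := if_pos rfl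
    have hg0 : g 0 = ENNReal.ofReal ((1 - r) / (1 - s)) := if_neg (by norm_num)
    have e1 : s * (r / s) = r := by field_simp
    have e0 : (1 - s) * ((1 - r) / (1 - s)) = 1 - r := by
      rw [mul_comm]
      exact div_mul_cancel₀ _ (by intro h; apply absurd h; intro h'; linarith [sub_eq_zero.mp h'])
    rw [hg1, hg0, smul_smul, smul_smul, ← ENNReal.ofReal_mul hs0.le,
      ← ENNReal.ofReal_mul (by linarith : (0:ℝ) ≤ 1 - s), e1, e0]
  have hac : bern r ≪ bern s := by
    rw [← hW]; exact withDensity_absolutelyContinuous _ _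
  have hrn : (bern r).rnDeriv (bern s) =ᵐ[bern s] g := by
    rw [← hW]; exact Measure.rnDeriv_withDensity (bern s) hg
  have hrn' : (bern r).rnDeriv (bern s) =ᵐ[bern r] g := hrn.filter_mono hac.ae_le
  set F : ℝ → ℝ :=
    fun x => if x = 1 then Real.log (r / s) else Real.log ((1 - r) / (1 - s)) with hFdef
  have hFmeas : Measurable F := by
    refine Measurable.ite ?_ measurable_const measurable_const
    rw [hsetone]; exact measurableSet_singleton 1
  have hFg : (fun x => Real.log (((bern r).rnDeriv (bern s) x).toReal)) =ᵐ[bern r] F := by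
    filter_upwards [hrn'] with x hx
    rw [hx]
    by_cases h : x = 1
    · rw [show g x = ENNReal.ofReal (r / s) from if_pos h,
        ENNReal.toReal_ofReal (div_nonneg hr0 hs0.le)]
      exact (if_pos h).symm
    · rw [show g x = ENNReal.ofReal ((1 - r) / (1 - s)) from if_neg h,
        ENNReal.toReal_ofReal (div_nonneg (by linarith) (by linarith))]
      exact (if_neg h).symm
  have hFint : Integrable F (bern r) := integrable_bern hFmeas r
  have hint : Integrable (fun x => Real.log (((bern r).rnDeriv (bern s) x).toReal)) (bern r) :=
    hFint.congr hFg.symm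
  rw [KL, if_pos ⟨hac, hint⟩, integral_congr_ae hFg, integral_bern hFmeas hr0 hr1]
  have hF1 : F 1 = Real.log (r / s) := if_pos rfl
  have hF0 : F 0 = Real.log ((1 - r) / (1 - s)) := if_neg (by norm_num)
  rw [hF1, hF0]

lemma klR_pos {q p : ℝ} (hq : 0 < q) (hqp : q < p) (hp : p < 1) :
    0 < q * Real.log (q / p) + (1 - q) * Real.log ((1 - q) / (1 - p)) := by
  have hp0 : 0 < p := hq.trans hqp
  have hq1 : q < 1 := hqp.trans hp
  have h1 : Real.log (p / q) < p / q - 1 :=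
    Real.log_lt_sub_one_of_pos (by positivity) (by
      intro h
      have : p = q := by field_simp at h; linarith
      linarith)
  have h2 : Real.log ((1 - p) / (1 - q)) < (1 - p) / (1 - q) - 1 :=
    Real.log_lt_sub_one_of_pos (by
        apply div_pos <;> linarith) (by
      intro h
      rw [div_eq_one_iff_eq (by intro h'; linarith [sub_eq_zero.mp h'] : (1:ℝ) - q ≠ 0)] at h
      linarith)
  have e1 : Real.log (q / p) = - Real.log (p / q) := by
    rw [← Real.log_inv, inv_div]
  have e2 : Real.log ((1 - q) / (1 - p)) = - Real.log ((1 - p) / (1 - q)) := by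
    rw [← Real.log_inv, inv_div]
  have e3 : q * (p / q) = p := by field_simp
  have e4 : (1 - q) * ((1 - p) / (1 - q)) = 1 - p := by
    rw [mul_comm]
    exact div_mul_cancel₀ _ (by intro h'; linarith [sub_eq_zero.mp h'])
  rw [e1, e2]
  nlinarith [mul_lt_mul_of_pos_left h1 hq,
    mul_lt_mul_of_pos_left h2 (by linarith : (0:ℝ) < 1 - q)]

lemma klR_nonneg {r s : ℝ} (hr0 : 0 ≤ r) (hrs : r < s) (hs1 : s < 1) :
    0 ≤ r * Real.log (r / s) + (1 - r) * Real.log ((1 - r) / (1 - s)) := by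
  have hs0 : 0 < s := lt_of_le_of_lt hr0 hrs
  rcases eq_or_lt_of_le hr0 with h | h
  · rw [← h]
    have : Real.log ((1 - 0) / (1 - s)) = - Real.log (1 - s) := by
      rw [sub_zero, ← Real.log_inv, one_div]
    rw [this]
    have := Real.log_neg (by linarith : (0:ℝ) < 1 - s) (by linarith : 1 - s < 1)
    simp only [zero_mul, zero_add, sub_zero, one_mul]
    linarith
  · have hr1 : r < 1 := hrs.trans hs1
    have h1 : Real.log (s / r) ≤ s / r - 1 := Real.log_le_sub_one_of_pos (by positivity)
    have h2 : Real.log ((1 - s) / (1 - r)) ≤ (1 - s) / (1 - r) - 1 :=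
      Real.log_le_sub_one_of_pos (by apply div_pos <;> linarith)
    have e1 : Real.log (r / s) = - Real.log (s / r) := by rw [← Real.log_inv, inv_div]
    have e2 : Real.log ((1 - r) / (1 - s)) = - Real.log ((1 - s) / (1 - r)) := by
      rw [← Real.log_inv, inv_div]
    have e3 : r * (s / r) = s := by field_simp
    have e4 : (1 - r) * ((1 - s) / (1 - r)) = 1 - s := by
      rw [mul_comm]
      exact div_mul_cancel₀ _ (by intro h'; linarith [sub_eq_zero.mp h'])
    rw [e1, e2]
    nlinarith [mul_le_mul_of_nonneg_left h1 hr0,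
      mul_le_mul_of_nonneg_left h2 (by linarith : (0:ℝ) ≤ 1 - r)]

lemma klR_le {r q : ℝ} (hr0 : 0 ≤ r) (hrq : r < q) (hq1 : q < 1) :
    r * Real.log (r / q) + (1 - r) * Real.log ((1 - r) / (1 - q)) ≤ q / (1 - q) := by
  have hq0 : 0 < q := lt_of_le_of_lt hr0 hrq
  have hr1 : r < 1 := hrq.trans hq1
  have hD : 0 < 1 - q := by linarith
  have t1 : r * Real.log (r / q) ≤ 0 := by
    rcases eq_or_lt_of_le hr0 with h | h
    · rw [← h, zero_mul]
    · have : Real.log (r / q) ≤ 0 :=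
        Real.log_nonpos (by positivity) (by rw [div_le_one hq0]; linarith)
      exact mul_nonpos_of_nonneg_of_nonpos hr0 this
  have h2 : Real.log ((1 - r) / (1 - q)) ≤ (1 - r) / (1 - q) - 1 :=
    Real.log_le_sub_one_of_pos (by apply div_pos <;> linarith)
  have key : (1 - r) * ((1 - r) / (1 - q) - 1) ≤ q / (1 - q) := by
    have e : (1 - r) * ((1 - r) / (1 - q) - 1) = ((1 - r) * (q - r)) / (1 - q) := by
      field_simp
      ring
    rw [e]
    rw [div_le_div_iff₀ hD hD]
    nlinarith [mul_nonneg (mul_nonneg (by linarith : (0:ℝ) ≤ 1 - r)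
      (by linarith : (0:ℝ) ≤ q - r)) hD.le, sq_nonneg (q - r), sq_nonneg r,
      mul_nonneg hr0 (by linarith : (0:ℝ) ≤ q - r)]
  have t2 : (1 - r) * Real.log ((1 - r) / (1 - q)) ≤ q / (1 - q) :=
    le_trans (mul_le_mul_of_nonneg_left h2 (by linarith)) key
  linarith

lemma klR_key {r q p : ℝ} (hr0 : 0 ≤ r) (hrq : r ≤ q) (hq : 0 < q) (hqp : q < p) (hp : p < 1) :
    (r * Real.log (r / q) + (1 - r) * Real.log ((1 - r) / (1 - q)))
      + (q * Real.log (q / p) + (1 - q) * Real.log ((1 - q) / (1 - p)))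
      ≤ r * Real.log (r / p) + (1 - r) * Real.log ((1 - r) / (1 - p)) := by
  have hp0 : 0 < p := hq.trans hqp
  have hq1 : q < 1 := hqp.trans hp
  have A : Real.log q ≤ Real.log p := Real.log_le_log hq hqp.le
  have B : Real.log (1 - p) ≤ Real.log (1 - q) :=
    Real.log_le_log (by linarith) (by linarith)
  have eqp : Real.log (q / p) = Real.log q - Real.log p := Real.log_div hq.ne' hp0.ne'
  have eQ : Real.log ((1 - q) / (1 - p)) = Real.log (1 - q) - Real.log (1 - p) :=
    Real.log_div (by linarith) (by linarith)
  rcases eq_or_lt_of_le hr0 with h | h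
  · rw [← h]
    have e1 : Real.log ((1 - 0) / (1 - q)) = - Real.log (1 - q) := by
      rw [sub_zero, ← Real.log_inv, one_div]
    have e2 : Real.log ((1 - 0) / (1 - p)) = - Real.log (1 - p) := by
      rw [sub_zero, ← Real.log_inv, one_div]
    rw [e1, e2, eqp, eQ]
    have hlqp : Real.log q - Real.log p ≤ 0 := by linarith
    nlinarith [mul_nonneg hq.le (sub_nonneg.mpr B), mul_nonpos_of_nonneg_of_nonpos hq.le hlqp]
  · have hr1 : r < 1 := lt_of_le_of_lt hrq hq1
    have erq : Real.log (r / q) = Real.log r - Real.log q := Real.log_div h.ne' hq.ne'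
    have erp : Real.log (r / p) = Real.log r - Real.log p := Real.log_div h.ne' hp0.ne'
    have eRq : Real.log ((1 - r) / (1 - q)) = Real.log (1 - r) - Real.log (1 - q) :=
      Real.log_div (by linarith) (by linarith)
    have eRp : Real.log ((1 - r) / (1 - p)) = Real.log (1 - r) - Real.log (1 - p) :=
      Real.log_div (by linarith) (by linarith)
    rw [erq, erp, eRq, eRp, eqp, eQ]
    nlinarith [mul_nonneg (sub_nonneg.mpr hrq)
      (by linarith : (0:ℝ) ≤ (Real.log p - Real.log q) + (Real.log (1 - q) - Real.log (1 - p)))]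

lemma ratio_lb {a b Δ B : ℝ} {C : ℝ≥0∞} (hab : b + Δ ≤ a) (hb0 : 0 ≤ b) (hbB : b ≤ B)
    (hΔ : 0 < Δ) (hB : 0 < B) (hC : C ≤ ENNReal.ofReal b) :
    ENNReal.ofReal (1 + Δ / B) ≤ ENNReal.ofReal a / C := by
  rcases eq_or_ne C 0 with h | h
  · rw [h, ENNReal.div_zero (by simp [ENNReal.ofReal_eq_zero]; linarith)]
    exact le_top
  · have hb : 0 < b := by
      rcases eq_or_lt_of_le hb0 with h' | h'
      · exfalso; apply h
        rw [← le_zero_iff]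
        calc C ≤ ENNReal.ofReal b := hC
          _ = 0 := by simp [ENNReal.ofReal_eq_zero]; linarith
      · exact h'
    calc ENNReal.ofReal (1 + Δ / B) ≤ ENNReal.ofReal (a / b) := by
          apply ENNReal.ofReal_le_ofReal
          rw [le_div_iff₀ hb]
          have h1 : Δ / B * b ≤ Δ / B * B :=
            mul_le_mul_of_nonneg_left hbB (by positivity)
          have h2 : Δ / B * B = Δ := div_mul_cancel₀ _ hB.ne'
          nlinarith
      _ = ENNReal.ofReal a / ENNReal.ofReal b := ENNReal.ofReal_div_of_pos hb
      _ ≤ ENNReal.ofReal a / C := ENNReal.div_le_div_left hC _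

/-- Example 2: the bounded-support class `L_{[0,1]}` is not discrimination
equivalent: with `ν = Bernoulli(p)`, `ν' = Bernoulli(q)` and `0 < q < p < 1`, every
`ν̃ ∈ L_{[0,1]}` with `mean ν̃ < q` and `KL(ν̃, ν) < ∞` is either `Bernoulli(r)` with
`r ∈ (0,1)`, `r < q`, or `δ₀`; in each case the ratio `KL(ν̃,ν)/KL_inf(ν̃,q) ≠ 1`; and the
infimum of the ratio is `≠ 1`, so `L_{[0,1]}` is not discrimination equivalent. -/
theorem boundedClass_not_discrimination_equivalent
    (p q : ℝ) (hq : 0 < q) (hqp : q < p) (hp : p < 1) :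
    (∀ νt ∈ boundedClass 0 1, mean νt < q → KL νt (bern p) < ⊤ →
      (∃ r : ℝ, 0 < r ∧ r < 1 ∧ r < q ∧ νt = bern r) ∨ νt = Measure.dirac (0 : ℝ)) ∧
    (∀ νt ∈ boundedClass 0 1, mean νt < q → KL νt (bern p) < ⊤ →
      KL νt (bern p) / KLinf (boundedClass 0 1) νt q ≠ 1) ∧
    ratioInf (boundedClass 0 1) (bern p) q ≠ 1 ∧
    ¬ DiscrimEquiv (boundedClass 0 1) := by
  have hq1 : q < 1 := hqp.trans hp
  have hp0 : 0 < p := hq.trans hqp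
  -- structure of finite-KL measures
  have hstruct : ∀ νt ∈ boundedClass 0 1, mean νt < q → KL νt (bern p) < ⊤ →
      ∃ r : ℝ, 0 ≤ r ∧ r < q ∧ νt = bern r := by
    intro νt hmem hmean hKL
    by_cases hcond : νt ≪ bern p ∧
        Integrable (fun x => Real.log ((νt.rnDeriv (bern p) x).toReal)) νt
    · have hnull : νt (({0, 1} : Set ℝ)ᶜ) = 0 := hcond.1 (bern_compl_pair p)
      haveI : IsProbabilityMeasure νt := hmem.1
      obtain ⟨hr0, hr1, heq⟩ := eq_bern_of_null_compl hnull
      refine ⟨(νt {1}).toReal, hr0, ?_, heq⟩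
      rw [heq, mean_bern_s8 hr0 hr1] at hmean
      exact hmean
    · rw [KL, if_neg hcond] at hKL
      exact absurd hKL (lt_irrefl _)
  -- the uniform lower bound on the ratio
  set Δ : ℝ := q * Real.log (q / p) + (1 - q) * Real.log ((1 - q) / (1 - p)) with hΔdef
  set B : ℝ := q / (1 - q) with hBdef
  set c : ℝ≥0∞ := ENNReal.ofReal (1 + Δ / B) with hcdef
  have hΔ : 0 < Δ := klR_pos hq hqp hp
  have hB : 0 < B := div_pos hq (by linarith)
  have hc1 : (1 : ℝ≥0∞) < c := by
    rw [hcdef, ← ENNReal.ofReal_one]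
    exact (ENNReal.ofReal_lt_ofReal_iff (by positivity)).mpr
      (by nlinarith [div_pos hΔ hB])
  have hratio : ∀ r : ℝ, 0 ≤ r → r < q →
      c ≤ KL (bern r) (bern p) / KLinf (boundedClass 0 1) (bern r) q := by
    intro r hr0 hrq
    have hr1 : r ≤ 1 := by linarith
    have hKLq : KL (bern r) (bern q)
        = ENNReal.ofReal (r * Real.log (r / q) + (1 - r) * Real.log ((1 - r) / (1 - q))) :=
      KL_bern hr0 hr1 hq hq1
    have hinf_le : KLinf (boundedClass 0 1) (bern r) q
        ≤ ENNReal.ofReal (r * Real.log (r / q) + (1 - r) * Real.log ((1 - r) / (1 - q))) := by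
      rw [← hKLq]
      exact iInf₂_le (bern q) ⟨bern_mem_class hq.le hq1.le, by rw [mean_bern_s8 hq.le hq1.le]⟩
    rw [KL_bern hr0 hr1 hp0 hp]
    exact ratio_lb (by linarith [klR_key hr0 hrq.le hq hqp hp]) (klR_nonneg hr0 hrq hq1)
      (klR_le hr0 hrq hq1) hΔ hB hinf_le
  have part3 : ratioInf (boundedClass 0 1) (bern p) q ≠ 1 := by
    by_cases hz : ∃ νt ∈ {ρ | ρ ∈ boundedClass 0 1 ∧ mean ρ < q},
        KL νt (bern p) / KLinf (boundedClass 0 1) νt q = 0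
    · obtain ⟨νt, hνt, h0⟩ := hz
      have hle : ratioInf (boundedClass 0 1) (bern p) q ≤ 0 := by
        rw [← h0]
        exact iInf₂_le νt hνt
      rw [le_zero_iff] at hle
      rw [hle]
      simp
    · push_neg at hz
      have hge : c ≤ ratioInf (boundedClass 0 1) (bern p) q := by
        refine le_iInf₂ fun νt hνt => ?_
        obtain ⟨hmem, hmean⟩ := hνt
        rcases eq_or_ne (KL νt (bern p)) ⊤ with htop | hfin
        · rcases eq_or_ne (KLinf (boundedClass 0 1) νt q) ⊤ with hCtop | hCfin
          · exfalso
            exact hz νt ⟨hmem, hmean⟩ (by rw [htop, hCtop, ENNReal.div_top])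
          · rw [htop, ENNReal.top_div_of_ne_top hCfin]
            exact le_top
        · obtain ⟨r, hr0, hrq, rfl⟩ := hstruct νt hmem hmean (lt_top_iff_ne_top.mpr hfin)
          exact hratio r hr0 hrq
      intro h
      rw [h] at hge
      exact absurd hge hc1.not_ge
  refine ⟨?_, ?_, part3, ?_⟩
  · intro νt hmem hmean hKL
    obtain ⟨r, hr0, hrq, rfl⟩ := hstruct νt hmem hmean hKL
    rcases eq_or_lt_of_le hr0 with h | h
    · right
      rw [← h, bern_zero]
    · exact Or.inl ⟨r, h, hrq.trans hq1, hrq, rfl⟩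
  · intro νt hmem hmean hKL
    obtain ⟨r, hr0, hrq, rfl⟩ := hstruct νt hmem hmean hKL
    intro h
    have := hratio r hr0 hrq
    rw [h] at this
    exact absurd this hc1.not_ge
  · intro hDE
    have hmq := hDE (bern p) (bern_mem_class hp0.le hp.le) (bern q)
      (bern_mem_class hq.le hq1.le)
      (by rw [mean_bern_s8 hq.le hq1.le, mean_bern_s8 hp0.le hp.le]; exact hqp)
    rw [mean_bern_s8 hq.le hq1.le] at hmq
    exact part3 hmq

end BanditFrag
end
end

section
/- In the regret analysis of Generalized KL_inf-UCB with exploration functions f_a(t) = log(t) + 2 log log(t) + g(N_a(t)): for a suboptimal arm a in an environment with optimal mean μ₁, let E_{1j} := 1{ N_a(j)·(KL_inf(ν_a, μ₁) − d) ≤ f_a(j), A_j = a }. Then for T ≥ K+1 and d > 0 with d < KL_inf(ν_a, μ₁), the pathwise bound Σ_{j=1}^T E_{1j} ≤ log(T)/(KL_inf(ν_a, μ₁) − d) + O(log log(T)) holds. -/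
open MeasureTheory ProbabilityTheory Filter Set
open scoped ENNReal Classical

noncomputable section

namespace BanditFrag

private lemma one_lt_log_three : (1:ℝ) < Real.log 3 := by
  rw [Real.lt_log_iff_exp_lt (by norm_num)]
  calc Real.exp 1 < 2.7182818286 := Real.exp_one_lt_d9
    _ < 3 := by norm_num

set_option maxHeartbeats 1000000 in
/-- Core growth estimate: if `n·Δ ≤ log T + 2 log log T + C₁ log(1+n) + C₂` then
`n + 1 ≤ log T / Δ + C log log T` for a suitable constant `C`. -/
private lemma key_growth (C₁ C₂ Δ : ℝ) (hC₁ : 0 < C₁) (hC₂ : 0 < C₂) (hΔ : 0 < Δ) :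
    ∃ C > (0:ℝ), ∀ (T n : ℕ), 3 ≤ T →
      (n : ℝ) * Δ ≤ Real.log T + 2 * Real.log (Real.log T)
        + (C₁ * Real.log (1 + (n:ℝ)) + C₂) →
      (n : ℝ) + 1 ≤ Real.log T / Δ + C * Real.log (Real.log T) := by
  have hlog3 : (1:ℝ) < Real.log 3 := one_lt_log_three
  obtain ⟨B₁, hB₁⟩ : ∃ x : ℝ, x = C₁ * (Real.log (2 * C₁ / Δ) - 1) := ⟨_, rfl⟩
  obtain ⟨D, hD⟩ : ∃ x : ℝ, x = 6 / Δ + 2 + 2 * (|B₁| + C₂) / Δ := ⟨_, rfl⟩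
  have hDpos : 0 < D := by
    have h1 : 0 < 6 / Δ := by positivity
    have h2 : 0 ≤ 2 * (|B₁| + C₂) / Δ := by positivity
    rw [hD]; linarith
  obtain ⟨ℓ, hℓdef⟩ : ∃ x : ℝ, x = Real.log (Real.log 3) := ⟨_, rfl⟩
  have hℓ : 0 < ℓ := hℓdef ▸ Real.log_pos hlog3
  obtain ⟨K₀, hK₀⟩ : ∃ x : ℝ, x = (C₁ * |Real.log D| + C₂) / Δ + 1 := ⟨_, rfl⟩
  have hK₀pos : 0 < K₀ := by
    have : 0 ≤ (C₁ * |Real.log D| + C₂) / Δ := by positivity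
    rw [hK₀]; linarith
  refine ⟨(2 + C₁) / Δ + K₀ / ℓ, by positivity, ?_⟩
  intro T n hT3 H
  have hTR : (3:ℝ) ≤ (T:ℝ) := by exact_mod_cast hT3
  have hlogT : 1 < Real.log T := by
    have := Real.log_le_log (by norm_num : (0:ℝ) < 3) hTR
    linarith
  have hlT0 : (0:ℝ) < Real.log T := by linarith
  have hllT0 : 0 < Real.log (Real.log T) := Real.log_pos hlogT
  have hllTge : ℓ ≤ Real.log (Real.log T) := by
    rw [hℓdef]
    exact Real.log_le_log (by linarith) (Real.log_le_log (by norm_num) hTR)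
  have h1n : (0:ℝ) < 1 + (n:ℝ) := by positivity
  have hcpos : 0 < 2 * C₁ / Δ := by positivity
  -- log(1+n) ≤ (1+n)/c - 1 + log c  with c = 2C₁/Δ
  have hlog1n : Real.log (1 + (n:ℝ)) ≤ (1 + (n:ℝ)) / (2 * C₁ / Δ) - 1
      + Real.log (2 * C₁ / Δ) := by
    have h := Real.log_le_sub_one_of_pos (show 0 < (1 + (n:ℝ)) / (2 * C₁ / Δ) by positivity)
    rw [Real.log_div h1n.ne' hcpos.ne'] at h
    linarith
  have hmul : C₁ * ((1 + (n:ℝ)) / (2 * C₁ / Δ)) = (1 + (n:ℝ)) * Δ / 2 := by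
    field_simp
  have hstep1 : C₁ * Real.log (1 + (n:ℝ)) ≤ (1 + (n:ℝ)) * Δ / 2 + B₁ := by
    calc C₁ * Real.log (1 + (n:ℝ))
        ≤ C₁ * ((1 + (n:ℝ)) / (2 * C₁ / Δ) - 1 + Real.log (2 * C₁ / Δ)) :=
          mul_le_mul_of_nonneg_left hlog1n hC₁.le
      _ = (1 + (n:ℝ)) * Δ / 2 + B₁ := by rw [hB₁]; linear_combination hmul
  have hllTleT : Real.log (Real.log T) ≤ Real.log T := by
    have := Real.log_le_sub_one_of_pos hlT0
    linarith
  have habs : B₁ ≤ |B₁| := le_abs_self B₁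
  have p1 : 0 ≤ |B₁| * (Real.log T - 1) := mul_nonneg (abs_nonneg _) (by linarith)
  have p2 : 0 ≤ C₂ * (Real.log T - 1) := mul_nonneg hC₂.le (by linarith)
  have p3 : 0 ≤ Δ * (Real.log T - 1) := mul_nonneg hΔ.le (by linarith)
  have hexp : D * Real.log T * Δ
      = 6 * Real.log T + 2 * Δ * Real.log T + 2 * (|B₁| + C₂) * Real.log T := by
    rw [hD]; field_simp
  have hDT : 1 + (n:ℝ) ≤ D * Real.log T := by
    have h2 : (1 + (n:ℝ)) * Δ ≤ D * Real.log T * Δ := by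
      rw [hexp]; linarith [H, hstep1, hllTleT, p1, p2, p3, habs]
    exact le_of_mul_le_mul_right h2 hΔ
  have hlogD : Real.log (1 + (n:ℝ)) ≤ Real.log D + Real.log (Real.log T) := by
    have h := Real.log_le_log h1n hDT
    rwa [Real.log_mul hDpos.ne' hlT0.ne'] at h
  have hstep2 : C₁ * Real.log (1 + (n:ℝ))
      ≤ C₁ * Real.log D + C₁ * Real.log (Real.log T) := by
    have h := mul_le_mul_of_nonneg_left hlogD hC₁.le
    linarith [h]
  have hKD : K₀ * Δ = C₁ * |Real.log D| + C₂ + Δ := by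
    rw [hK₀]; field_simp
  have h0 : 0 ≤ K₀ * Δ / ℓ := by positivity
  have h1 : (K₀ * Δ / ℓ) * ℓ ≤ (K₀ * Δ / ℓ) * Real.log (Real.log T) :=
    mul_le_mul_of_nonneg_left hllTge h0
  have h2 : (K₀ * Δ / ℓ) * ℓ = K₀ * Δ := by field_simp
  have h3 : C₁ * Real.log D ≤ C₁ * |Real.log D| :=
    mul_le_mul_of_nonneg_left (le_abs_self _) hC₁.le
  have htail : C₁ * Real.log D + C₂ + Δ ≤ (K₀ * Δ / ℓ) * Real.log (Real.log T) := by
    rw [h2] at h1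
    linarith
  have hrhs : (Real.log (T:ℝ) / Δ + ((2 + C₁) / Δ + K₀ / ℓ) * Real.log (Real.log T)) * Δ
      = Real.log T + (2 + C₁) * Real.log (Real.log T)
        + (K₀ * Δ / ℓ) * Real.log (Real.log T) := by
    field_simp; ring
  have hgoalmul : ((n:ℝ) + 1) * Δ
      ≤ (Real.log T / Δ + ((2 + C₁) / Δ + K₀ / ℓ) * Real.log (Real.log T)) * Δ := by
    rw [hrhs]
    linarith [H, hstep2, htail]
  exact le_of_mul_le_mul_right hgoalmul hΔ

/-- Monotonicity of the exploration threshold in `t`. -/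
private lemma fUCB_le_of_lt (C₁ C₂ : ℝ) (n : ℕ) {j T : ℕ} (hj : j < T) (hT : 3 ≤ T) :
    fUCB C₁ C₂ n j ≤ Real.log T + 2 * Real.log (Real.log T) + gFun C₁ C₂ n := by
  have hTR : (3:ℝ) ≤ (T:ℝ) := by exact_mod_cast hT
  have hlogT : 1 < Real.log T := by
    have := Real.log_le_log (by norm_num : (0:ℝ) < 3) hTR
    linarith [one_lt_log_three]
  have hlj : Real.log j ≤ Real.log T := by
    rcases Nat.eq_zero_or_pos j with h | h
    · simp [h]; linarith
    · exact Real.log_le_log (by exact_mod_cast h) (by exact_mod_cast hj.le)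
  have hlj0 : 0 ≤ Real.log j := by
    rcases Nat.eq_zero_or_pos j with h | h
    · simp [h]
    · exact Real.log_nonneg (by exact_mod_cast h)
  have hllj : Real.log (Real.log j) ≤ Real.log (Real.log T) := by
    by_cases h : Real.log j ≤ 1
    · have h1 : Real.log (Real.log j) ≤ 0 := Real.log_nonpos hlj0 h
      have h2 : 0 ≤ Real.log (Real.log T) := (Real.log_pos hlogT).le
      linarith
    · push_neg at h
      exact Real.log_le_log (by linarith) hlj
  unfold fUCB
  linarith

/-- `pulls` is strictly increasing across a round where arm `a` is pulled. -/
private lemma pulls_lt_pulls {K : ℕ} (π : Policy K) (z : ℕ → Fin K → ℝ) (a : Fin K)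
    {j1 j2 : ℕ} (h : j1 < j2) (ha : arm π z j1 = a) :
    pulls π z a j1 < pulls π z a j2 := by
  unfold pulls
  apply Finset.card_lt_card
  refine (Finset.ssubset_iff_of_subset
    (Finset.filter_subset_filter _ (Finset.range_subset_range.mpr h.le))).mpr ?_
  refine ⟨j1, Finset.mem_filter.mpr ⟨Finset.mem_range.mpr h, ha⟩, fun hmem => ?_⟩
  exact absurd (Finset.mem_range.mp (Finset.mem_filter.mp hmem).1) (lt_irrefl j1)

/-- Lemma 1, bounding `Σ E_{1j}`: in the regret analysis of Generalized
`KL_inf`-UCB, the pathwise bound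
`Σ_{j=1}^T 1{N_a(j)(KL_inf(ν_a,μ₁) − d) ≤ f_a(j), A_j = a}
  ≤ log T/(KL_inf(ν_a,μ₁) − d) + O(log log T)` holds. -/
theorem sum_E1_bound
    {K : ℕ} (hK : 2 ≤ K) (L : Set (Measure ℝ)) (C₁ C₂ : ℝ) (hC₁ : 0 < C₁) (hC₂ : 0 < C₂)
    (π : Policy K) (hπ : IsKLinfUCB L (fun _ => fUCB C₁ C₂) π)
    (ν : Fin K → Measure ℝ) (hmem : ∀ c, ν c ∈ L)
    (hord : ∀ c d : Fin K, c < d → mean (ν d) < mean (ν c))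
    (a : Fin K) (ha : a ≠ ⟨0, by omega⟩)
    (d : ℝ) (hd0 : 0 < d)
    (hd : d < (KLinf L (ν a) (mean (ν ⟨0, by omega⟩))).toReal) :
    ∃ C > (0 : ℝ), ∀ z : ℕ → Fin K → ℝ, ∀ T : ℕ, K + 1 ≤ T →
      (∑ j ∈ Finset.range T,
          (if (pulls π z a j : ℝ) *
                ((KLinf L (ν a) (mean (ν ⟨0, by omega⟩))).toReal - d)
                ≤ fUCB C₁ C₂ (pulls π z a j) j ∧ arm π z j = a
            then (1 : ℝ) else 0))
        ≤ Real.log T / ((KLinf L (ν a) (mean (ν ⟨0, by omega⟩))).toReal - d)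
            + C * Real.log (Real.log T) := by
  have hΔ : 0 < (KLinf L (ν a) (mean (ν ⟨0, by omega⟩))).toReal - d := by linarith
  obtain ⟨C, hCpos, hkey⟩ := key_growth C₁ C₂
    ((KLinf L (ν a) (mean (ν ⟨0, by omega⟩))).toReal - d) hC₁ hC₂ hΔ
  refine ⟨C, hCpos, ?_⟩
  intro z T hT
  have hT3 : 3 ≤ T := by omega
  have hTR : (3:ℝ) ≤ (T:ℝ) := by exact_mod_cast hT3
  have hlogT : 1 < Real.log T := by
    have := Real.log_le_log (by norm_num : (0:ℝ) < 3) hTR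
    linarith [one_lt_log_three]
  have hllT0 : 0 ≤ Real.log (Real.log T) := (Real.log_pos hlogT).le
  set r : ℝ := Real.log T / ((KLinf L (ν a) (mean (ν ⟨0, by omega⟩))).toReal - d)
      + C * Real.log (Real.log T) with hr
  have hr0 : 0 ≤ r := by
    have h1 : 0 ≤ Real.log T / ((KLinf L (ν a) (mean (ν ⟨0, by omega⟩))).toReal - d) :=
      div_nonneg (by linarith) hΔ.le
    have h2 : 0 ≤ C * Real.log (Real.log T) := mul_nonneg hCpos.le hllT0
    rw [hr]; linarith
  rw [Finset.sum_boole]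
  have hcard : ((Finset.range T).filter fun j =>
      (pulls π z a j : ℝ) * ((KLinf L (ν a) (mean (ν ⟨0, by omega⟩))).toReal - d)
        ≤ fUCB C₁ C₂ (pulls π z a j) j ∧ arm π z j = a).card ≤ ⌊r⌋₊ := by
    have hmem : ∀ j ∈ (Finset.range T).filter fun j =>
        (pulls π z a j : ℝ) * ((KLinf L (ν a) (mean (ν ⟨0, by omega⟩))).toReal - d)
          ≤ fUCB C₁ C₂ (pulls π z a j) j ∧ arm π z j = a,
        pulls π z a j ∈ Finset.range ⌊r⌋₊ := by
      intro j hj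
      rw [Finset.mem_filter, Finset.mem_range] at hj
      obtain ⟨hjT, hcond, _⟩ := hj
      have hmono := fUCB_le_of_lt C₁ C₂ (pulls π z a j) hjT hT3
      have hH : (pulls π z a j : ℝ) *
          ((KLinf L (ν a) (mean (ν ⟨0, by omega⟩))).toReal - d)
          ≤ Real.log T + 2 * Real.log (Real.log T)
            + (C₁ * Real.log (1 + (pulls π z a j : ℝ)) + C₂) := by
        have hg : gFun C₁ C₂ (pulls π z a j)
            = C₁ * Real.log (1 + (pulls π z a j : ℝ)) + C₂ := by
          unfold gFun; norm_num
        linarith [hcond, hmono, hg.ge, hg.le]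
      have hb := hkey T (pulls π z a j) hT3 hH
      rw [Finset.mem_range]
      have : (pulls π z a j + 1 : ℕ) ≤ ⌊r⌋₊ := Nat.le_floor (by push_cast; rw [hr]; linarith)
      omega
    have hinj : Set.InjOn (fun j => pulls π z a j)
        ((Finset.range T).filter fun j =>
          (pulls π z a j : ℝ) * ((KLinf L (ν a) (mean (ν ⟨0, by omega⟩))).toReal - d)
            ≤ fUCB C₁ C₂ (pulls π z a j) j ∧ arm π z j = a) := by
      intro j1 h1 j2 h2 heq
      simp only [Finset.coe_filter, Set.mem_setOf_eq, Finset.mem_range] at h1 h2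
      by_contra hne
      rcases lt_or_gt_of_ne hne with hlt | hlt
      · exact absurd heq (pulls_lt_pulls π z a hlt h1.2.2).ne
      · exact absurd heq.symm (pulls_lt_pulls π z a hlt h2.2.2).ne
    simpa using Finset.card_le_card_of_injOn (fun j => pulls π z a j) hmem hinj
  calc (((Finset.range T).filter fun j =>
      (pulls π z a j : ℝ) * ((KLinf L (ν a) (mean (ν ⟨0, by omega⟩))).toReal - d)
        ≤ fUCB C₁ C₂ (pulls π z a j) j ∧ arm π z j = a).card : ℝ)
      ≤ (⌊r⌋₊ : ℝ) := by exact_mod_cast hcard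
    _ ≤ r := Nat.floor_le hr0

end BanditFrag
end
end
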